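/- arXiv:1401.0744 — 4 statements merged into one kernel-verified Lean document; each statement's English description precedes it below -/
import Mathlib

section
/- Let G be a Lie group with identity e and let f : G → (ℝ⁺, ·) be a smooth homomorphism of Lie groups into the multiplicative group of positive reals. If G admits an f-bi-invariant Riemannian metric ⟨·,·⟩, then the induced inner product ⟨·,·⟩_e on T_eG is Ad-invariant, i.e. ⟨Ad_a X, Ad_a Y⟩_e = ⟨X, Y⟩_e for all a ∈ G and X, Y ∈ T_eG. -/
open scoped Manifold

noncomputable section

/-- A (smooth) Riemannian metric on a manifold `G` modeled on `(E, H)` via `I`: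
a smooth family of inner products `⟨·,·⟩ₐ` on the tangent spaces `TangentSpace I a` (each of
which is, by definition, canonically `E`).  Smoothness is expressed through this canonical
identification `TangentSpace I a = E`. -/
structure SmoothRiemannianMetric {E : Type*} [NormedAddCommGroup E] [NormedSpace ℝ E]
    {H : Type*} [TopologicalSpace H] (I : ModelWithCorners ℝ E H)
    (G : Type*) [TopologicalSpace G] [ChartedSpace H G] where
  /-- the inner product `⟨·,·⟩ₐ` on the tangent space `TangentSpace I a = E` at each point -/
  metric : G → E →L[ℝ] E →L[ℝ] ℝ
  symm : ∀ (a : G) (X Y : TangentSpace I a), metric a X Y = metric a Y X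
  pos : ∀ (a : G) (X : TangentSpace I a), X ≠ 0 → 0 < metric a X X
  smooth : ContMDiff I 𝓘(ℝ, E →L[ℝ] E →L[ℝ] ℝ) (⊤ : ℕ∞) metric

/-- The Riemannian metric `g` on the Lie group `G` is `f`-left invariant if
`⟨(dL_b)ₐ X, (dL_b)ₐ Y⟩_{b*a} = (f (b*a) / f a) * ⟨X, Y⟩ₐ` for all `a b : G` and
`X, Y ∈ TₐG`, where `L_b` is left translation by `b`. -/
def IsFLeftInvariant {E : Type*} [NormedAddCommGroup E] [NormedSpace ℝ E]
    {H : Type*} [TopologicalSpace H] (I : ModelWithCorners ℝ E H)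
    {G : Type*} [TopologicalSpace G] [ChartedSpace H G] [Group G]
    (f : G → ℝ) (g : SmoothRiemannianMetric I G) : Prop :=
  ∀ (a b : G) (X Y : TangentSpace I a),
    g.metric (b * a) (mfderiv I I (fun x => b * x) a X) (mfderiv I I (fun x => b * x) a Y)
      = (f (b * a) / f a) * g.metric a X Y

/-- The Riemannian metric `g` on the Lie group `G` is `f`-right invariant if
`⟨(dR_b)ₐ X, (dR_b)ₐ Y⟩_{a*b} = (f (a*b) / f a) * ⟨X, Y⟩ₐ` for all `a b : G` and
`X, Y ∈ TₐG`, where `R_b` is right translation by `b`. -/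
def IsFRightInvariant {E : Type*} [NormedAddCommGroup E] [NormedSpace ℝ E]
    {H : Type*} [TopologicalSpace H] (I : ModelWithCorners ℝ E H)
    {G : Type*} [TopologicalSpace G] [ChartedSpace H G] [Group G]
    (f : G → ℝ) (g : SmoothRiemannianMetric I G) : Prop :=
  ∀ (a b : G) (X Y : TangentSpace I a),
    g.metric (a * b) (mfderiv I I (fun x => x * b) a X) (mfderiv I I (fun x => x * b) a Y)
      = (f (a * b) / f a) * g.metric a X Y

/-- If `f : G → (ℝ⁺, ·)` is a smooth homomorphism of Lie groups and `G` admits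
an `f`-bi-invariant Riemannian metric `⟨·,·⟩`, then the induced inner product `⟨·,·⟩ₑ` on `TₑG`
is `Ad`-invariant: `⟨Ad_a X, Ad_a Y⟩ₑ = ⟨X, Y⟩ₑ`, where `Ad_a` is the differential at `e` of the
conjugation map `x ↦ a * x * a⁻¹`. -/
theorem adInvariant_of_fBiInvariant_of_hom
    {E : Type*} [NormedAddCommGroup E] [NormedSpace ℝ E]
    {H : Type*} [TopologicalSpace H] (I : ModelWithCorners ℝ E H)
    (G : Type*) [TopologicalSpace G] [ChartedSpace H G] [Group G] [LieGroup I (⊤ : ℕ∞) G]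
    (f : G → ℝ) (hf : ContMDiff I 𝓘(ℝ, ℝ) (⊤ : ℕ∞) f) (hfpos : ∀ a, 0 < f a)
    (hfhom : ∀ a b : G, f (a * b) = f a * f b)
    (g : SmoothRiemannianMetric I G)
    (hgl : IsFLeftInvariant I f g) (hgr : IsFRightInvariant I f g) :
    ∀ (a : G) (X Y : TangentSpace I (1 : G)),
      g.metric 1 (mfderiv I I (fun x => a * x * a⁻¹) 1 X)
          (mfderiv I I (fun x => a * x * a⁻¹) 1 Y)
        = g.metric 1 X Y := by
  intro a X Y
  have hL : MDifferentiableAt I I (fun x : G => a * x) 1 := mdifferentiableAt_mul_left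
  have hR : MDifferentiableAt I I (fun x : G => x * a⁻¹) (a * 1) := mdifferentiableAt_mul_right
  have hcomp : mfderiv I I (fun x : G => a * x * a⁻¹) 1
      = (mfderiv I I (fun x : G => x * a⁻¹) (a * 1)).comp
          (mfderiv I I (fun x : G => a * x) 1) := by
    have := mfderiv_comp (1 : G) hR hL
    exact this
  have f1 : f 1 = 1 := by
    have h := hfhom 1 1
    simp at h
    nlinarith [hfpos 1, h]
  have faa : f (a * 1 * a⁻¹) = 1 := by simp [f1]
  have h2 := hgl 1 a X Y
  have h1 := hgr (a * 1) a⁻¹ (mfderiv I I (fun x : G => a * x) 1 X)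
      (mfderiv I I (fun x : G => a * x) 1 Y)
  rw [hcomp]
  simp only [ContinuousLinearMap.comp_apply]
  have key : g.metric (a * 1 * a⁻¹)
      (mfderiv I I (fun x : G => x * a⁻¹) (a * 1) (mfderiv I I (fun x : G => a * x) 1 X))
      (mfderiv I I (fun x : G => x * a⁻¹) (a * 1) (mfderiv I I (fun x : G => a * x) 1 Y))
      = g.metric 1 X Y := by
    rw [h1, h2, faa, f1]
    have hfa := (hfpos (a * 1)).ne'
    field_simp
  simpa using key
end
end

section
/- Let G be a Lie group with identity e, let f : G → ℝ be a smooth positive function with f(e) = 1, and let ⟨·,·⟩ be an f-left invariant Riemannian metric on G. If the induced inner product ⟨·,·⟩_e on T_eG is Ad(G)-invariant (⟨Ad_a X, Ad_a Y⟩_e = ⟨X, Y⟩_e for all a ∈ G and X, Y ∈ T_eG), then ⟨·,·⟩ is also f-right invariant, hence f-bi-invariant. -/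
open scoped Manifold

noncomputable section

/-- If an `f`-left invariant Riemannian metric on a Lie group `G` induces an
`Ad(G)`-invariant inner product at the identity, then it is also `f`-right invariant, hence
`f`-bi-invariant. -/
theorem fRightInvariant_of_adInvariant
    {E : Type*} [NormedAddCommGroup E] [NormedSpace ℝ E]
    {H : Type*} [TopologicalSpace H] (I : ModelWithCorners ℝ E H)
    (G : Type*) [TopologicalSpace G] [ChartedSpace H G] [Group G] [LieGroup I (⊤ : ℕ∞) G]
    (f : G → ℝ) (hf : ContMDiff I 𝓘(ℝ, ℝ) (⊤ : ℕ∞) f) (hfpos : ∀ a, 0 < f a) (hfe : f 1 = 1)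
    (g : SmoothRiemannianMetric I G) (hgl : IsFLeftInvariant I f g)
    (had : ∀ (a : G) (X Y : TangentSpace I (1 : G)),
      g.metric 1 (mfderiv I I (fun x => a * x * a⁻¹) 1 X)
          (mfderiv I I (fun x => a * x * a⁻¹) 1 Y)
        = g.metric 1 X Y) :
    IsFRightInvariant I f g := by
  intro a b X Y
  -- differentiability facts
  have hL1 : MDifferentiableAt I I (fun x : G => a⁻¹ * x) a :=
    mdifferentiableAt_mul_left
  have hC : MDifferentiableAt I I (fun x : G => b⁻¹ * x * b⁻¹⁻¹) (1 : G) :=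
    mdifferentiableAt_mul_right.comp 1 mdifferentiableAt_mul_left
  have hL2 : MDifferentiableAt I I (fun x : G => (a * b) * x) (1 : G) :=
    mdifferentiableAt_mul_left
  -- decompose right translation
  have hfun : (fun x : G => x * b)
      = (fun x : G => (a * b) * x) ∘ ((fun x : G => b⁻¹ * x * b⁻¹⁻¹) ∘ (fun x : G => a⁻¹ * x)) := by
    funext x
    simp [mul_assoc]
  have hF : MDifferentiableAt I I ((fun x : G => b⁻¹ * x * b⁻¹⁻¹) ∘ (fun x : G => a⁻¹ * x)) a := by
    have : (fun x : G => a⁻¹ * x) a = (1 : G) := by simp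
    exact (this ▸ hC).comp a hL1
  have key : mfderiv I I (fun x : G => x * b) a
      = ((mfderiv I I (fun x : G => (a * b) * x) 1).comp
          (mfderiv I I (fun x : G => b⁻¹ * x * b⁻¹⁻¹) 1)).comp
        (mfderiv I I (fun x : G => a⁻¹ * x) a) := by
    rw [hfun]
    have h1 : mfderiv I I ((fun x : G => (a * b) * x) ∘
        ((fun x : G => b⁻¹ * x * b⁻¹⁻¹) ∘ (fun x : G => a⁻¹ * x))) a
        = (mfderiv I I (fun x : G => (a * b) * x)
            (((fun x : G => b⁻¹ * x * b⁻¹⁻¹) ∘ (fun x : G => a⁻¹ * x)) a)).comp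
          (mfderiv I I ((fun x : G => b⁻¹ * x * b⁻¹⁻¹) ∘ (fun x : G => a⁻¹ * x)) a) := by
      apply mfderiv_comp
      · simpa using hL2
      · exact hF
    have h2 : mfderiv I I ((fun x : G => b⁻¹ * x * b⁻¹⁻¹) ∘ (fun x : G => a⁻¹ * x)) a
        = (mfderiv I I (fun x : G => b⁻¹ * x * b⁻¹⁻¹) ((fun x : G => a⁻¹ * x) a)).comp
          (mfderiv I I (fun x : G => a⁻¹ * x) a) := by
      apply mfderiv_comp
      · simpa using hC
      · exact hL1
    rw [h1, h2]
    simp only [Function.comp_apply]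
    rw [show a⁻¹ * a = (1:G) from inv_mul_cancel a, show b⁻¹ * (1:G) * b⁻¹⁻¹ = (1:G) by simp]
    rfl
  set X' : TangentSpace I (1 : G) := mfderiv I I (fun x : G => a⁻¹ * x) a X with hX'
  set Y' : TangentSpace I (1 : G) := mfderiv I I (fun x : G => a⁻¹ * x) a Y with hY'
  set X'' : TangentSpace I (1 : G) := mfderiv I I (fun x : G => b⁻¹ * x * b⁻¹⁻¹) 1 X' with hX''
  set Y'' : TangentSpace I (1 : G) := mfderiv I I (fun x : G => b⁻¹ * x * b⁻¹⁻¹) 1 Y' with hY''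
  have happ : ∀ Z : TangentSpace I a, mfderiv I I (fun x : G => x * b) a Z
      = mfderiv I I (fun x : G => (a * b) * x) 1
          (mfderiv I I (fun x : G => b⁻¹ * x * b⁻¹⁻¹) 1
            (mfderiv I I (fun x : G => a⁻¹ * x) a Z)) := by
    intro Z
    rw [key]; rfl
  rw [happ X, happ Y]
  -- step 1 : f-left invariance at 1 with b := a*b
  have step1 := hgl 1 (a * b) X'' Y''
  simp only [mul_one, hfe, div_one] at step1
  -- step 2 : Ad-invariance
  have step2 := had b⁻¹ X' Y'
  -- step 3 : f-left invariance at a with b := a⁻¹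
  have step3 := hgl a a⁻¹ X Y
  simp only [inv_mul_cancel, hfe] at step3
  rw [← hX', ← hY'] at step3
  calc g.metric (a * b) (mfderiv I I (fun x : G => (a * b) * x) 1 X'')
        (mfderiv I I (fun x : G => (a * b) * x) 1 Y'')
      = f (a * b) * g.metric 1 X'' Y'' := step1
    _ = f (a * b) * g.metric 1 X' Y' := by rw [hX'', hY'', step2]
    _ = f (a * b) * (1 / f a * g.metric a X Y) := by rw [step3]
    _ = f (a * b) / f a * g.metric a X Y := by ring
end
end

section
/- Let G be a Lie group with identity e, let f : G → ℝ be a smooth positive function with f(e) = 1, and let ⟨·,·⟩ be an f-left invariant Riemannian metric on G. If ⟨·,·⟩ is also f-right invariant (hence f-bi-invariant), then for the inversion map ζ : G → G, ζ(a) = a⁻¹, one has f(a)·⟨(dζ)_a X, (dζ)_a Y⟩_{a⁻¹} = f(a⁻¹)·⟨X, Y⟩_a for all a ∈ G and X, Y ∈ T_aG. -/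
open scoped Manifold

noncomputable section

private theorem aux_mfderiv_inv_one {E : Type*} [NormedAddCommGroup E] [NormedSpace ℝ E]
    {H : Type*} [TopologicalSpace H] (I : ModelWithCorners ℝ E H)
    (G : Type*) [TopologicalSpace G] [ChartedSpace H G] [Group G] [LieGroup I (⊤ : ℕ∞) G]
    (v : E) : mfderiv I I (fun x : G => x⁻¹) (1:G) v = -v := by
  have hinvd : MDifferentiable I I (fun x : G => x⁻¹) :=
    (contMDiff_inv I (⊤ : ℕ∞)).mdifferentiable (by simp)
  have hpair : MDifferentiableAt I (I.prod I) (fun x : G => (x, x⁻¹)) (1:G) :=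
    mdifferentiableAt_id.prodMk (hinvd 1)
  have hmul : MDifferentiableAt (I.prod I) I (fun p : G × G => p.1 * p.2) ((1:G), (1:G)⁻¹) :=
    ((contMDiff_mul I (⊤ : ℕ∞)).mdifferentiable (by simp)) _
  have hcomp := mfderiv_comp_apply (I' := I.prod I)
    (f := fun x : G => (x, x⁻¹)) (g := fun p : G × G => p.1 * p.2) (x := (1:G))
    hmul hpair v
  have hc : mfderiv I I ((fun p : G × G => p.1 * p.2) ∘ fun x : G => (x, x⁻¹)) (1:G) = 0 := by
    have h1 : ((fun p : G × G => p.1 * p.2) ∘ fun x : G => (x, x⁻¹)) = fun _ : G => (1:G) :=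
      funext fun x => mul_inv_cancel x
    rw [h1, mfderiv_const]
  rw [hc] at hcomp
  have hpairval : (mfderiv I (I.prod I) (fun x : G => (x, x⁻¹)) (1:G)) v
      = (v, (mfderiv I I (fun x : G => x⁻¹) (1:G)) v) := by
    have h := mdifferentiableAt_id.mfderiv_prod (hinvd (1:G))
    rw [mfderiv_id] at h
    show (mfderiv I (I.prod I) (fun x : G => (id x, x⁻¹)) (1:G)) v = _
    rw [h]; rfl
  rw [hpairval] at hcomp
  have hadd := mfderiv_prod_eq_add_apply (I := I) (I' := I) (I'' := I)
    (f := fun p : G × G => p.1 * p.2) (p := ((1:G), (1:G)⁻¹))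
    (v := (v, (mfderiv I I (fun x : G => x⁻¹) (1:G)) v)) hmul
  replace hcomp := hcomp.trans hadd
  have h2 : (fun z : G => z * (1:G)⁻¹) = id := funext fun z => by simp
  have h3 : (fun z : G => (1:G) * z) = id := funext fun z => by simp
  rw [h2, h3, mfderiv_id, mfderiv_id] at hcomp
  simp only [ContinuousLinearMap.coe_id', id_eq, ContinuousLinearMap.zero_apply] at hcomp
  exact eq_neg_of_add_eq_zero_right hcomp.symm

private theorem aux_mfderiv_inv_chain {E : Type*} [NormedAddCommGroup E] [NormedSpace ℝ E]
    {H : Type*} [TopologicalSpace H] (I : ModelWithCorners ℝ E H)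
    (G : Type*) [TopologicalSpace G] [ChartedSpace H G] [Group G] [LieGroup I (⊤ : ℕ∞) G]
    (a : G) (v : E) :
    mfderiv I I (fun x : G => x⁻¹) a v =
      (mfderiv I I (fun x : G => x * a⁻¹) (1:G) : E →L[ℝ] E)
        ((mfderiv I I (fun x : G => x⁻¹) (1:G) : E →L[ℝ] E)
          ((mfderiv I I (fun x : G => a⁻¹ * x) a : E →L[ℝ] E) v)) := by
  have hinvd : MDifferentiable I I (fun x : G => x⁻¹) :=
    (contMDiff_inv I (⊤ : ℕ∞)).mdifferentiable (by simp)
  have hLd : MDifferentiableAt I I (fun x : G => a⁻¹ * x) a :=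
    (contMDiff_mul_left (n := (⊤ : ℕ∞))).mdifferentiableAt (by simp)
  have hZd : MDifferentiableAt I I (fun x : G => x⁻¹) (a⁻¹ * a) := hinvd _
  have hRd : MDifferentiableAt I I (fun x : G => x * a⁻¹) ((a⁻¹ * a)⁻¹) :=
    (contMDiff_mul_right (n := (⊤ : ℕ∞))).mdifferentiableAt (by simp)
  have hRZd : MDifferentiableAt I I ((fun x : G => x * a⁻¹) ∘ (fun x : G => x⁻¹)) (a⁻¹ * a) :=
    hRd.comp _ hZd
  have hfun : (fun x : G => x⁻¹)
      = ((fun x : G => x * a⁻¹) ∘ fun x : G => x⁻¹) ∘ (fun x : G => a⁻¹ * x) := by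
    funext x; simp [Function.comp, mul_inv_rev, mul_assoc]
  have h1 := mfderiv_comp_apply (f := fun x : G => a⁻¹ * x)
    (g := (fun x : G => x * a⁻¹) ∘ fun x : G => x⁻¹) (x := a) hRZd hLd v
  have h2 := mfderiv_comp_apply (f := fun x : G => x⁻¹) (g := fun x : G => x * a⁻¹)
    (x := a⁻¹ * a) hRd hZd ((mfderiv I I (fun x : G => a⁻¹ * x) a) v)
  conv_lhs => rw [hfun]
  refine h1.trans (h2.trans ?_)
  have e1 : (mfderiv I I (fun x : G => x⁻¹) (a⁻¹ * a) : E →L[ℝ] E)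
      = (mfderiv I I (fun x : G => x⁻¹) (1:G) : E →L[ℝ] E) := by
    rw [inv_mul_cancel]
  have e2 : (mfderiv I I (fun x : G => x * a⁻¹) ((a⁻¹ * a)⁻¹) : E →L[ℝ] E)
      = (mfderiv I I (fun x : G => x * a⁻¹) (1:G) : E →L[ℝ] E) := by
    rw [inv_mul_cancel, inv_one]
  rw [e1, e2]; rfl

/-- If an `f`-left invariant Riemannian metric on a Lie group `G` is also
`f`-right invariant (hence `f`-bi-invariant), then for the inversion map `ζ : a ↦ a⁻¹` one has
`f a * ⟨(dζ)ₐ X, (dζ)ₐ Y⟩_{a⁻¹} = f a⁻¹ * ⟨X, Y⟩ₐ`. -/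
theorem inversion_identity_of_fBiInvariant
    {E : Type*} [NormedAddCommGroup E] [NormedSpace ℝ E]
    {H : Type*} [TopologicalSpace H] (I : ModelWithCorners ℝ E H)
    (G : Type*) [TopologicalSpace G] [ChartedSpace H G] [Group G] [LieGroup I (⊤ : ℕ∞) G]
    (f : G → ℝ) (hf : ContMDiff I 𝓘(ℝ, ℝ) (⊤ : ℕ∞) f) (hfpos : ∀ a, 0 < f a) (hfe : f 1 = 1)
    (g : SmoothRiemannianMetric I G)
    (hgl : IsFLeftInvariant I f g) (hgr : IsFRightInvariant I f g) :
    ∀ (a : G) (X Y : TangentSpace I a),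
      f a * g.metric a⁻¹ (mfderiv I I (fun x : G => x⁻¹) a X)
          (mfderiv I I (fun x : G => x⁻¹) a Y)
        = f a⁻¹ * g.metric a X Y := by
  intro a X Y
  have hmX : ∀ v : E, mfderiv I I (fun x : G => x⁻¹) a v
      = -((mfderiv I I (fun x : G => x * a⁻¹) (1:G) : E →L[ℝ] E)
          ((mfderiv I I (fun x : G => a⁻¹ * x) a : E →L[ℝ] E) v)) := by
    intro v
    rw [aux_mfderiv_inv_chain I G a v,
      aux_mfderiv_inv_one I G ((mfderiv I I (fun x : G => a⁻¹ * x) a : E →L[ℝ] E) v)]; exact map_neg _ _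
  have s1 : (g.metric a⁻¹ (mfderiv I I (fun x : G => x⁻¹) a X)
        (mfderiv I I (fun x : G => x⁻¹) a Y) : ℝ)
      = g.metric a⁻¹
          (-((mfderiv I I (fun x : G => x * a⁻¹) (1:G) : E →L[ℝ] E)
            ((mfderiv I I (fun x : G => a⁻¹ * x) a : E →L[ℝ] E) X)))
          (-((mfderiv I I (fun x : G => x * a⁻¹) (1:G) : E →L[ℝ] E)
            ((mfderiv I I (fun x : G => a⁻¹ * x) a : E →L[ℝ] E) Y))) := by
    exact congrArg₂ (fun u w : E => g.metric a⁻¹ u w) (hmX X) (hmX Y)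
  have s2 : g.metric a⁻¹
          (-((mfderiv I I (fun x : G => x * a⁻¹) (1:G) : E →L[ℝ] E)
            ((mfderiv I I (fun x : G => a⁻¹ * x) a : E →L[ℝ] E) X)))
          (-((mfderiv I I (fun x : G => x * a⁻¹) (1:G) : E →L[ℝ] E)
            ((mfderiv I I (fun x : G => a⁻¹ * x) a : E →L[ℝ] E) Y)))
      = g.metric a⁻¹
          ((mfderiv I I (fun x : G => x * a⁻¹) (1:G) : E →L[ℝ] E)
            ((mfderiv I I (fun x : G => a⁻¹ * x) a : E →L[ℝ] E) X))
          ((mfderiv I I (fun x : G => x * a⁻¹) (1:G) : E →L[ℝ] E)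
            ((mfderiv I I (fun x : G => a⁻¹ * x) a : E →L[ℝ] E) Y)) := by
    exact (show ∀ u w : E, g.metric a⁻¹ (-u) (-w) = g.metric a⁻¹ u w from fun u w => by simp) _ _
  have s3 : g.metric a⁻¹
          ((mfderiv I I (fun x : G => x * a⁻¹) (1:G) : E →L[ℝ] E)
            ((mfderiv I I (fun x : G => a⁻¹ * x) a : E →L[ℝ] E) X))
          ((mfderiv I I (fun x : G => x * a⁻¹) (1:G) : E →L[ℝ] E)
            ((mfderiv I I (fun x : G => a⁻¹ * x) a : E →L[ℝ] E) Y))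
      = (f a⁻¹ / f 1) * g.metric 1
          ((mfderiv I I (fun x : G => a⁻¹ * x) a : E →L[ℝ] E) X)
          ((mfderiv I I (fun x : G => a⁻¹ * x) a : E →L[ℝ] E) Y) := by
    have h := hgr 1 a⁻¹ ((mfderiv I I (fun x : G => a⁻¹ * x) a : E →L[ℝ] E) X)
      ((mfderiv I I (fun x : G => a⁻¹ * x) a : E →L[ℝ] E) Y)
    simpa only [one_mul] using h
  have s4 : (g.metric 1
          ((mfderiv I I (fun x : G => a⁻¹ * x) a : E →L[ℝ] E) X)
          ((mfderiv I I (fun x : G => a⁻¹ * x) a : E →L[ℝ] E) Y) : ℝ)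
      = (f 1 / f a) * g.metric a X Y := by
    have h := hgl a a⁻¹ X Y
    simpa only [inv_mul_cancel] using h
  rw [s1, s2, s3, s4, hfe]
  have hfa : f a ≠ 0 := (hfpos a).ne'
  field_simp
end
end

section
/- Let G be a Lie group with identity e, let f : G → ℝ be a smooth positive function with f(e) = 1, and let ⟨·,·⟩ be an f-left invariant Riemannian metric on G. If for the inversion map ζ : G → G, ζ(a) = a⁻¹, one has f(a)·⟨(dζ)_a X, (dζ)_a Y⟩_{a⁻¹} = f(a⁻¹)·⟨X, Y⟩_a for all a ∈ G and X, Y ∈ T_aG, then ⟨·,·⟩ is also f-right invariant, hence f-bi-invariant. -/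
open scoped Manifold

noncomputable section

/-- If an `f`-left invariant Riemannian metric on a Lie group `G` satisfies
`f a * ⟨(dζ)ₐ X, (dζ)ₐ Y⟩_{a⁻¹} = f a⁻¹ * ⟨X, Y⟩ₐ` for the inversion map `ζ : a ↦ a⁻¹`, then it
is also `f`-right invariant, hence `f`-bi-invariant. -/
theorem fRightInvariant_of_inversion_identity
    {E : Type*} [NormedAddCommGroup E] [NormedSpace ℝ E]
    {H : Type*} [TopologicalSpace H] (I : ModelWithCorners ℝ E H)
    (G : Type*) [TopologicalSpace G] [ChartedSpace H G] [Group G] [LieGroup I (⊤ : ℕ∞) G]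
    (f : G → ℝ) (hf : ContMDiff I 𝓘(ℝ, ℝ) (⊤ : ℕ∞) f) (hfpos : ∀ a, 0 < f a) (hfe : f 1 = 1)
    (g : SmoothRiemannianMetric I G) (hgl : IsFLeftInvariant I f g)
    (hinv : ∀ (a : G) (X Y : TangentSpace I a),
      f a * g.metric a⁻¹ (mfderiv I I (fun x : G => x⁻¹) a X)
          (mfderiv I I (fun x : G => x⁻¹) a Y)
        = f a⁻¹ * g.metric a X Y) :
    IsFRightInvariant I f g := by
  intro a b X Y
  have hζ : ∀ c : G, MDifferentiableAt I I (fun x : G => x⁻¹) c := fun c =>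
    (contMDiff_inv I (⊤ : ℕ∞)).mdifferentiableAt (by simp)
  have hL : ∀ c : G, MDifferentiableAt I I (fun x : G => b⁻¹ * x) c := fun c =>
    (contMDiff_mul_left (n := ((⊤ : ℕ∞) : WithTop ℕ∞))).mdifferentiableAt (by simp)
  have hfun : (fun x : G => x * b)
      = (fun x : G => x⁻¹) ∘ ((fun x : G => b⁻¹ * x) ∘ (fun x : G => x⁻¹)) := by
    funext x; simp [Function.comp, mul_inv_rev]
  have key : ∀ Z : TangentSpace I a, mfderiv I I (fun x : G => x * b) a Z =
      mfderiv I I (fun x : G => x⁻¹) (b⁻¹ * a⁻¹)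
        (mfderiv I I (fun x : G => b⁻¹ * x) a⁻¹
          (mfderiv I I (fun x : G => x⁻¹) a Z)) := by
    intro Z
    rw [hfun, mfderiv_comp a (by simpa using hζ (b⁻¹ * a⁻¹)) ((hL a⁻¹).comp a (hζ a)),
      mfderiv_comp a (by simpa using hL a⁻¹) (hζ a)]
    rfl
  set U : TangentSpace I a⁻¹ := mfderiv I I (fun x : G => x⁻¹) a X with hU
  set V : TangentSpace I a⁻¹ := mfderiv I I (fun x : G => x⁻¹) a Y with hV
  have h3 : f a * g.metric a⁻¹ U V = f a⁻¹ * g.metric a X Y := hinv a X Y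
  have h2 : g.metric (b⁻¹ * a⁻¹) (mfderiv I I (fun x : G => b⁻¹ * x) a⁻¹ U)
      (mfderiv I I (fun x : G => b⁻¹ * x) a⁻¹ V)
      = (f (b⁻¹ * a⁻¹) / f a⁻¹) * g.metric a⁻¹ U V := hgl a⁻¹ b⁻¹ U V
  have h1 := hinv (b⁻¹ * a⁻¹) (mfderiv I I (fun x : G => b⁻¹ * x) a⁻¹ U)
    (mfderiv I I (fun x : G => b⁻¹ * x) a⁻¹ V)
  rw [show (b⁻¹ * a⁻¹)⁻¹ = a * b by simp] at h1
  rw [key X, key Y]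
  have hpa := (hfpos a).ne'
  have hpa' := (hfpos a⁻¹).ne'
  have hpr := (hfpos (b⁻¹ * a⁻¹)).ne'
  set p := f a
  set q := f a⁻¹
  set r := f (b⁻¹ * a⁻¹)
  set s := f (a * b)
  set Q := g.metric a X Y
  set P := g.metric a⁻¹ U V
  set N := g.metric (b⁻¹ * a⁻¹) (mfderiv I I (fun x : G => b⁻¹ * x) a⁻¹ U)
    (mfderiv I I (fun x : G => b⁻¹ * x) a⁻¹ V)
  set M := g.metric (a * b)
    (mfderiv I I (fun x : G => x⁻¹) (b⁻¹ * a⁻¹) (mfderiv I I (fun x : G => b⁻¹ * x) a⁻¹ U))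
    (mfderiv I I (fun x : G => x⁻¹) (b⁻¹ * a⁻¹) (mfderiv I I (fun x : G => b⁻¹ * x) a⁻¹ V))
  -- h1 : r * M = s * N, h2 : N = (r / q) * P, h3 : p * P = q * Q
  have h2' : q * N = r * P := by rw [h2]; field_simp
  have hqr : (q * r) * (p * M) = (q * r) * (s * Q) := by
    linear_combination p * q * h1 + p * s * h2' + r * s * h3
  have hM : p * M = s * Q := mul_left_cancel₀ (mul_ne_zero hpa' hpr) hqr
  field_simp
  linear_combination hM
end
end
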